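/- Let n ≥ 6. The power graph of the symmetric group Sₙ contains an induced path on 5 vertices; explicitly in S₆ the elements (5 6)(1 2 3), (1 2 3), (1 2 3)(4 5), (4 5), (4 5)(1 2 6) form an induced P₅ (each consecutive pair adjacent via taking powers, all other pairs non-adjacent). -/

import Mathlib

def powerGraph (G : Type*) [Group G] : SimpleGraph G where
  Adj u v := u ≠ v ∧ (u ∈ Subgroup.zpowers v ∨ v ∈ Subgroup.zpowers u)
  symm := by
    constructor
    rintro u v ⟨h1, h2⟩
    exact ⟨h1.symm, h2.symm⟩
  loopless := by
    constructor
    rintro v ⟨h1, _⟩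
    exact h1 rfl

/-- `Γ` contains an induced path on 5 vertices. -/
def HasInducedP5 {V : Type*} (Γ : SimpleGraph V) : Prop :=
  ∃ a b c d e : V,
    a ≠ b ∧ a ≠ c ∧ a ≠ d ∧ a ≠ e ∧ b ≠ c ∧ b ≠ d ∧ b ≠ e ∧ c ≠ d ∧ c ≠ e ∧ d ≠ e ∧
    Γ.Adj a b ∧ Γ.Adj b c ∧ Γ.Adj c d ∧ Γ.Adj d e ∧
    ¬Γ.Adj a c ∧ ¬Γ.Adj a d ∧ ¬Γ.Adj a e ∧ ¬Γ.Adj b d ∧ ¬Γ.Adj b e ∧ ¬Γ.Adj c e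

/-- `Γ` contains an induced copy of `P₂ ∪ P₃`. -/
def HasInducedP2UnionP3 {V : Type*} (Γ : SimpleGraph V) : Prop :=
  ∃ a b c d e : V,
    a ≠ b ∧ a ≠ c ∧ a ≠ d ∧ a ≠ e ∧ b ≠ c ∧ b ≠ d ∧ b ≠ e ∧ c ≠ d ∧ c ≠ e ∧ d ≠ e ∧
    Γ.Adj a b ∧ Γ.Adj c d ∧ Γ.Adj d e ∧
    ¬Γ.Adj a c ∧ ¬Γ.Adj a d ∧ ¬Γ.Adj a e ∧ ¬Γ.Adj b c ∧ ¬Γ.Adj b d ∧ ¬Γ.Adj b e ∧ ¬Γ.Adj c e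

/-- `Γ` contains an induced diamond (`K₄` minus an edge). -/
def HasInducedDiamond {V : Type*} (Γ : SimpleGraph V) : Prop :=
  ∃ a b c d : V,
    a ≠ b ∧ a ≠ c ∧ a ≠ d ∧ b ≠ c ∧ b ≠ d ∧ c ≠ d ∧
    Γ.Adj a b ∧ Γ.Adj a c ∧ Γ.Adj b c ∧ Γ.Adj b d ∧ Γ.Adj c d ∧ ¬Γ.Adj a d


section AuxForP5

private lemma mem_zpowers_map_iff' {G H : Type*} [Group G] [Group H] {φ : G →* H}
    (hφ : Function.Injective φ) (x y : G) :
    φ x ∈ Subgroup.zpowers (φ y) ↔ x ∈ Subgroup.zpowers y := by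
  constructor
  · rintro ⟨k, hk⟩
    exact ⟨k, hφ ((map_zpow φ y k).trans hk)⟩
  · rintro ⟨k, hk⟩
    exact ⟨k, (map_zpow φ y k).symm.trans (congrArg φ hk)⟩

private lemma not_mem_zpowers_of_fixed {α : Type*} (g h : Equiv.Perm α) (pt : α)
    (hg : g pt = pt) (hh : h pt ≠ pt) : h ∉ Subgroup.zpowers g := by
  rintro ⟨k, rfl⟩
  exact hh (Equiv.Perm.zpow_apply_eq_self_of_apply_eq_self hg k)

private def pa : Equiv.Perm (Fin 6) := Equiv.swap 4 5 * (Equiv.swap 0 1 * Equiv.swap 1 2)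
private def pb : Equiv.Perm (Fin 6) := Equiv.swap 0 1 * Equiv.swap 1 2
private def pc : Equiv.Perm (Fin 6) := (Equiv.swap 0 1 * Equiv.swap 1 2) * Equiv.swap 3 4
private def pd : Equiv.Perm (Fin 6) := Equiv.swap 3 4
private def pe : Equiv.Perm (Fin 6) := Equiv.swap 3 4 * (Equiv.swap 0 1 * Equiv.swap 1 5)

end AuxForP5

theorem symmetric_hasInducedP5 (n : ℕ) (hn : 6 ≤ n) :
    HasInducedP5 (powerGraph (Equiv.Perm (Fin n))) := by
  classical
  set ι : Fin 6 ↪ Fin n := Fin.castLEEmb hn with hι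
  set φ : Equiv.Perm (Fin 6) →* Equiv.Perm (Fin n) := Equiv.Perm.viaEmbeddingHom ι with hφdef
  have hφ : Function.Injective φ := Equiv.Perm.viaEmbeddingHom_injective ι
  refine ⟨φ pa, φ pb, φ pc, φ pd, φ pe,
    hφ.ne (by decide), hφ.ne (by decide), hφ.ne (by decide), hφ.ne (by decide),
    hφ.ne (by decide), hφ.ne (by decide), hφ.ne (by decide), hφ.ne (by decide),
    hφ.ne (by decide), hφ.ne (by decide), ?_, ?_, ?_, ?_, ?_, ?_, ?_, ?_, ?_, ?_⟩
  · exact ⟨hφ.ne (by decide),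
      Or.inr ((mem_zpowers_map_iff' hφ _ _).mpr ⟨(4 : ℤ), by decide⟩)⟩
  · exact ⟨hφ.ne (by decide),
      Or.inl ((mem_zpowers_map_iff' hφ _ _).mpr ⟨(4 : ℤ), by decide⟩)⟩
  · exact ⟨hφ.ne (by decide),
      Or.inr ((mem_zpowers_map_iff' hφ _ _).mpr ⟨(3 : ℤ), by decide⟩)⟩
  · exact ⟨hφ.ne (by decide),
      Or.inl ((mem_zpowers_map_iff' hφ _ _).mpr ⟨(3 : ℤ), by decide⟩)⟩
  · rintro ⟨-, h | h⟩
    · exact not_mem_zpowers_of_fixed pc pa 5 (by decide) (by decide)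
        ((mem_zpowers_map_iff' hφ _ _).mp h)
    · exact not_mem_zpowers_of_fixed pa pc 3 (by decide) (by decide)
        ((mem_zpowers_map_iff' hφ _ _).mp h)
  · rintro ⟨-, h | h⟩
    · exact not_mem_zpowers_of_fixed pd pa 0 (by decide) (by decide)
        ((mem_zpowers_map_iff' hφ _ _).mp h)
    · exact not_mem_zpowers_of_fixed pa pd 3 (by decide) (by decide)
        ((mem_zpowers_map_iff' hφ _ _).mp h)
  · rintro ⟨-, h | h⟩
    · exact not_mem_zpowers_of_fixed pe pa 2 (by decide) (by decide)
        ((mem_zpowers_map_iff' hφ _ _).mp h)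
    · exact not_mem_zpowers_of_fixed pa pe 3 (by decide) (by decide)
        ((mem_zpowers_map_iff' hφ _ _).mp h)
  · rintro ⟨-, h | h⟩
    · exact not_mem_zpowers_of_fixed pd pb 0 (by decide) (by decide)
        ((mem_zpowers_map_iff' hφ _ _).mp h)
    · exact not_mem_zpowers_of_fixed pb pd 3 (by decide) (by decide)
        ((mem_zpowers_map_iff' hφ _ _).mp h)
  · rintro ⟨-, h | h⟩
    · exact not_mem_zpowers_of_fixed pe pb 2 (by decide) (by decide)
        ((mem_zpowers_map_iff' hφ _ _).mp h)
    · exact not_mem_zpowers_of_fixed pb pe 3 (by decide) (by decide)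
        ((mem_zpowers_map_iff' hφ _ _).mp h)
  · rintro ⟨-, h | h⟩
    · exact not_mem_zpowers_of_fixed pe pc 2 (by decide) (by decide)
        ((mem_zpowers_map_iff' hφ _ _).mp h)
    · exact not_mem_zpowers_of_fixed pc pe 5 (by decide) (by decide)
        ((mem_zpowers_map_iff' hφ _ _).mp h)
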